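/- Let n > 1 and suppose δ = [[a,b],[c,d]] ∈ SL₂(ℤ) satisfies δᵀ·[[nC,-nA],[-nA,-B]]·δ = [[nC',-nA'],[-nA',-B']] where nA²+BC = -1 = nA'²+B'C'. Then n divides c, i.e., δ ∈ Γ₀(n). -/
import Mathlib


open Matrix

theorem conj_in_Gamma0 (n A B C A' B' C' a b c d : ℤ) (hn : 1 < n)
    (h : n * A ^ 2 + B * C = -1) (h' : n * A' ^ 2 + B' * C' = -1)
    (hdet : a * d - b * c = 1)
    (heq : (!![a, b; c, d]).transpose * !![n * C, -(n * A); -(n * A), -B] * !![a, b; c, d]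
        = !![n * C', -(n * A'); -(n * A'), -B']) :
    n ∣ c := by
  have e11 := congrFun (congrFun heq 0) 0
  have e12 := congrFun (congrFun heq 0) 1
  simp [Matrix.mul_apply, Fin.sum_univ_two, Matrix.vecHead, Matrix.vecTail, Matrix.transpose_apply] at e11 e12
  -- n ∣ B*c*c and n ∣ B*c*d
  have d1 : n ∣ B * c * c := ⟨C * a * a - 2 * A * a * c - C', by linear_combination -e11⟩
  have d2 : n ∣ B * c * d := ⟨C * a * b - A * a * d - A * b * c + A', by linear_combination -e12⟩
  have hcd : IsCoprime c d := ⟨-b, a, by linarith⟩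
  have d3 : n ∣ B * c := by
    have := dvd_sub (Dvd.dvd.mul_left d2 a) (Dvd.dvd.mul_left d1 b)
    have heq2 : a * (B * c * d) - b * (B * c * c) = B * c := by ring_nf; linear_combination (B*c) * hdet
    rwa [heq2] at this
  have hnB : IsCoprime n B := ⟨-A ^ 2, -C, by linarith⟩
  exact (IsCoprime.dvd_of_dvd_mul_left hnB) d3
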